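/- Let λ > 0, μ > 0, c > 0, α > 2 and define p_l(x) = (λ μ^α/(2πc Γ(α))) ∫_{‖x‖/c}^∞ e^{-(λ+μ)τ} τ^{α-1} exp((λ/c)√(c²τ² - ‖x‖²)) / √(c²τ² - ‖x‖²) dτ for x ∈ ℝ². Then ∫_{ℝ²} p_l(x) dx = 1 - (μ/(λ+μ))^α. -/

import Mathlib

open MeasureTheory Real Set

lemma aux_ivi (lam c τ : ℝ) (hlam : 0 < lam) (hc : 0 < c) (hτ : 0 < τ) :
    IntervalIntegrable
      (fun r => r * (Real.exp ((lam / c) * Real.sqrt (c ^ 2 * τ ^ 2 - r ^ 2)) /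
        Real.sqrt (c ^ 2 * τ ^ 2 - r ^ 2))) volume 0 (c * τ) := by
  set b := c * τ with hbdef
  have hb : 0 < b := by positivity
  have hsq : c ^ 2 * τ ^ 2 = b ^ 2 := by rw [hbdef]; ring
  have hg : IntervalIntegrable
      (fun r : ℝ => (b * Real.exp (lam * τ) / Real.sqrt b) * (b - r) ^ (-(1/2) : ℝ))
      volume 0 b := by
    have h0 : IntervalIntegrable (fun x : ℝ => x ^ (-(1/2) : ℝ)) volume 0 b :=
      intervalIntegral.intervalIntegrable_rpow' (by norm_num)
    have h1 := (h0.comp_sub_left b).symm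
    simpa using h1.const_mul (b * Real.exp (lam * τ) / Real.sqrt b)
  refine hg.mono_fun ?_ ?_
  · apply Measurable.aestronglyMeasurable
    fun_prop
  · rw [uIoc_of_le hb.le]
    refine (ae_restrict_iff' measurableSet_Ioc).2 (Filter.Eventually.of_forall fun x hx => ?_)
    obtain ⟨hx0, hxb⟩ := hx
    dsimp only
    rcases eq_or_lt_of_le hxb with heq | hxlt
    · have h0 : c ^ 2 * τ ^ 2 - b ^ 2 = 0 := by rw [hsq]; ring
      rw [heq]
      norm_num [h0, Real.zero_rpow]
    · have hu : 0 < c ^ 2 * τ ^ 2 - x ^ 2 := by rw [hsq]; nlinarith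
      set u := c ^ 2 * τ ^ 2 - x ^ 2 with hudef
      have hsu : 0 < Real.sqrt u := Real.sqrt_pos.2 hu
      have hf_nonneg : 0 ≤ x * (Real.exp ((lam / c) * Real.sqrt u) / Real.sqrt u) := by positivity
      have hub : Real.sqrt u ≤ b := by
        rw [show b = Real.sqrt (b ^ 2) from (Real.sqrt_sq hb.le).symm]
        apply Real.sqrt_le_sqrt; rw [hudef, hsq]; nlinarith
      have hexp : Real.exp ((lam / c) * Real.sqrt u) ≤ Real.exp (lam * τ) := by
        apply Real.exp_le_exp.2
        have : (lam / c) * Real.sqrt u ≤ (lam / c) * b := by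
          apply mul_le_mul_of_nonneg_left hub (by positivity)
        calc (lam/c) * Real.sqrt u ≤ (lam/c) * b := this
          _ = lam * τ := by rw [hbdef]; field_simp
      have hlow : Real.sqrt b * Real.sqrt (b - x) ≤ Real.sqrt u := by
        rw [← Real.sqrt_mul hb.le]
        apply Real.sqrt_le_sqrt
        rw [hudef, hsq]; nlinarith
      have hrpow : (b - x) ^ (-(1/2) : ℝ) = (Real.sqrt (b - x))⁻¹ := by
        rw [Real.rpow_neg (by linarith), Real.sqrt_eq_rpow]
      have hbx : 0 < Real.sqrt (b - x) := Real.sqrt_pos.2 (by linarith)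
      rw [Real.norm_eq_abs, Real.norm_eq_abs, abs_of_nonneg hf_nonneg]
      have h1 : x * Real.exp ((lam/c) * Real.sqrt u) ≤ b * Real.exp (lam * τ) :=
        mul_le_mul hxlt.le hexp (Real.exp_pos _).le hb.le
      have key : x * (Real.exp ((lam / c) * Real.sqrt u) / Real.sqrt u)
          ≤ (b * Real.exp (lam * τ) / Real.sqrt b) * (b - x) ^ (-(1/2) : ℝ) := by
        rw [hrpow, ← mul_div_assoc]
        calc x * Real.exp ((lam/c)*Real.sqrt u) / Real.sqrt u
            ≤ b * Real.exp (lam * τ) / (Real.sqrt b * Real.sqrt (b - x)) :=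
              div_le_div₀ (by positivity) h1 (by positivity) hlow
          _ = b * Real.exp (lam * τ) / Real.sqrt b * (Real.sqrt (b - x))⁻¹ := by
              field_simp
      exact key.trans (le_abs_self _)

lemma aux_val (lam c τ : ℝ) (hlam : 0 < lam) (hc : 0 < c) (hτ : 0 < τ) :
    ∫ r in (0:ℝ)..(c*τ), r * (Real.exp ((lam / c) * Real.sqrt (c ^ 2 * τ ^ 2 - r ^ 2)) /
        Real.sqrt (c ^ 2 * τ ^ 2 - r ^ 2)) = (c / lam) * (Real.exp (lam * τ) - 1) := by
  have hb : (0:ℝ) < c * τ := by positivity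
  set G : ℝ → ℝ := fun r => -(c/lam) * Real.exp ((lam/c) * Real.sqrt (c^2*τ^2 - r^2)) with hG
  have hcont : ContinuousOn G (Icc 0 (c*τ)) := by
    apply Continuous.continuousOn
    fun_prop
  have hderiv : ∀ x ∈ Ioo (0:ℝ) (c*τ), HasDerivWithinAt G
      (x * (Real.exp ((lam / c) * Real.sqrt (c ^ 2 * τ ^ 2 - x ^ 2)) /
        Real.sqrt (c ^ 2 * τ ^ 2 - x ^ 2))) (Ioi x) x := by
    intro x hx
    obtain ⟨hx0, hxb⟩ := hx
    have hu : 0 < c ^ 2 * τ ^ 2 - x ^ 2 := by nlinarith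
    have hsu : 0 < Real.sqrt (c ^ 2 * τ ^ 2 - x ^ 2) := Real.sqrt_pos.2 hu
    have h1 : HasDerivAt (fun r : ℝ => c^2*τ^2 - r^2) (-(2*x)) x := by
      simpa using (hasDerivAt_pow 2 x).const_sub (c^2*τ^2)
    have h2 : HasDerivAt (fun r : ℝ => Real.sqrt (c^2*τ^2 - r^2))
        (1 / (2 * Real.sqrt (c^2*τ^2 - x^2)) * -(2*x)) x :=
      (Real.hasDerivAt_sqrt hu.ne').comp x h1
    have h3 := ((h2.const_mul (lam/c)).exp).const_mul (-(c/lam))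
    have heq : -(c/lam) * (Real.exp ((lam/c) * Real.sqrt (c^2*τ^2 - x^2)) *
        ((lam/c) * (1 / (2 * Real.sqrt (c^2*τ^2 - x^2)) * -(2*x))))
        = x * (Real.exp ((lam / c) * Real.sqrt (c ^ 2 * τ ^ 2 - x ^ 2)) /
          Real.sqrt (c ^ 2 * τ ^ 2 - x ^ 2)) := by
      field_simp
    rw [← heq]
    exact h3.hasDerivWithinAt
  have hint := aux_ivi lam c τ hlam hc hτ
  have := intervalIntegral.integral_eq_sub_of_hasDeriv_right_of_le hb.le hcont hderiv hint
  rw [this]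
  have e1 : c ^ 2 * τ ^ 2 - (c*τ) ^ 2 = 0 := by ring
  have e2 : c ^ 2 * τ ^ 2 - (0:ℝ) ^ 2 = (c*τ)^2 := by ring
  rw [hG]
  simp only [e1, e2, Real.sqrt_zero, mul_zero, Real.exp_zero, mul_one,
    Real.sqrt_sq hb.le]
  have e3 : lam / c * (c * τ) = lam * τ := by field_simp
  rw [e3]
  ring

lemma aux_vanish (c τ r : ℝ) (hc : 0 < c) (hle : c^2 * τ^2 ≤ r^2) (X : ℝ) :
    Real.exp (X * Real.sqrt (c ^ 2 * τ ^ 2 - r ^ 2)) /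
      Real.sqrt (c ^ 2 * τ ^ 2 - r ^ 2) = 0 := by
  have : Real.sqrt (c ^ 2 * τ ^ 2 - r ^ 2) = 0 := Real.sqrt_eq_zero'.2 (by linarith)
  rw [this, div_zero]

lemma aux_slice_eq (lam mu c α τ : ℝ) (hlam : 0 < lam) (hmu : 0 < mu) (hc : 0 < c)
    (hτ : 0 < τ) :
    ∫ r in Ioi (0:ℝ), r * (Real.exp (-(lam + mu) * τ) * τ ^ (α - 1) *
        (Real.exp ((lam / c) * Real.sqrt (c ^ 2 * τ ^ 2 - r ^ 2)) /
          Real.sqrt (c ^ 2 * τ ^ 2 - r ^ 2)))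
      = Real.exp (-(lam + mu) * τ) * τ ^ (α - 1) * ((c / lam) * (Real.exp (lam * τ) - 1)) := by
  have hb : (0:ℝ) < c * τ := by positivity
  set f : ℝ → ℝ := fun r => r * (Real.exp (-(lam + mu) * τ) * τ ^ (α - 1) *
      (Real.exp ((lam / c) * Real.sqrt (c ^ 2 * τ ^ 2 - r ^ 2)) /
        Real.sqrt (c ^ 2 * τ ^ 2 - r ^ 2))) with hf
  have hind : indicator (Ioi (0:ℝ)) f = indicator (Ioc (0:ℝ) (c*τ)) f := by
    funext r
    by_cases h0 : 0 < r
    · by_cases h : r ≤ c*τ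
      · rw [indicator_of_mem (mem_Ioi.mpr h0), indicator_of_mem (mem_Ioc.mpr ⟨h0, h⟩)]
      · have hr : c * τ < r := not_le.1 h
        have hr2 : c^2 * τ^2 ≤ r^2 := by nlinarith
        have hz : f r = 0 := by rw [hf]; simp [aux_vanish c τ r hc hr2]
        rw [indicator_of_mem (mem_Ioi.mpr h0), indicator_of_notMem (fun hm => h hm.2), hz]
    · rw [indicator_of_notMem (by simpa using h0), indicator_of_notMem (fun hm => h0 hm.1)]
  have step1 : ∫ r in Ioi (0:ℝ), f r = ∫ r in Ioc (0:ℝ) (c*τ), f r := by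
    rw [← integral_indicator measurableSet_Ioi, hind, integral_indicator measurableSet_Ioc]
  rw [step1, ← intervalIntegral.integral_of_le hb.le]
  have step2 : ∀ r, f r = (Real.exp (-(lam + mu) * τ) * τ ^ (α - 1)) *
      (r * (Real.exp ((lam / c) * Real.sqrt (c ^ 2 * τ ^ 2 - r ^ 2)) /
        Real.sqrt (c ^ 2 * τ ^ 2 - r ^ 2))) := by intro r; rw [hf]; ring
  simp only [step2]
  rw [intervalIntegral.integral_const_mul, aux_val lam c τ hlam hc hτ]

lemma aux_slice_int (lam mu c α τ : ℝ) (hlam : 0 < lam) (hmu : 0 < mu) (hc : 0 < c)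
    (hτ : 0 < τ) :
    IntegrableOn (fun r => r * (Real.exp (-(lam + mu) * τ) * τ ^ (α - 1) *
        (Real.exp ((lam / c) * Real.sqrt (c ^ 2 * τ ^ 2 - r ^ 2)) /
          Real.sqrt (c ^ 2 * τ ^ 2 - r ^ 2)))) (Ioi (0:ℝ)) := by
  have hb : (0:ℝ) < c * τ := by positivity
  rw [← Ioc_union_Ioi_eq_Ioi hb.le]
  apply IntegrableOn.union
  · have h1 : IntegrableOn (fun r => r * (Real.exp ((lam / c) *
        Real.sqrt (c ^ 2 * τ ^ 2 - r ^ 2)) / Real.sqrt (c ^ 2 * τ ^ 2 - r ^ 2)))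
        (Ioc (0:ℝ) (c*τ)) :=
      (intervalIntegrable_iff_integrableOn_Ioc_of_le hb.le).1 (aux_ivi lam c τ hlam hc hτ)
    have h2 : IntegrableOn (fun r => (Real.exp (-(lam + mu) * τ) * τ ^ (α - 1)) *
        (r * (Real.exp ((lam / c) * Real.sqrt (c ^ 2 * τ ^ 2 - r ^ 2)) /
          Real.sqrt (c ^ 2 * τ ^ 2 - r ^ 2)))) (Ioc (0:ℝ) (c*τ)) :=
      h1.const_mul _
    exact h2.congr_fun (fun r _ => by ring) measurableSet_Ioc
  · refine integrableOn_zero.congr_fun (fun r hr => ?_) measurableSet_Ioi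
    have hcr : c * τ < r := hr
    have hr2 : c^2 * τ^2 ≤ r^2 := by nlinarith
    show (0:ℝ) = _
    simp [aux_vanish c τ r hc hr2]

lemma aux_gamma_int (a b : ℝ) (ha : 0 < a) (hb : 0 < b) :
    IntegrableOn (fun t : ℝ => t ^ (a - 1) * Real.exp (-(b * t))) (Ioi (0:ℝ)) := by
  have h := integrableOn_rpow_mul_exp_neg_mul_rpow (s := a - 1) (p := 1) (b := b)
    (by linarith) zero_lt_one hb
  refine h.congr_fun (fun x hx => ?_) measurableSet_Ioi
  simp only [Real.rpow_one, neg_mul]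

lemma aux_hpt (lam mu c α τ : ℝ) :
    Real.exp (-(lam + mu) * τ) * τ ^ (α - 1) * ((c / lam) * (Real.exp (lam * τ) - 1))
      = (c / lam) * (τ ^ (α - 1) * Real.exp (-(mu * τ))
          - τ ^ (α - 1) * Real.exp (-((lam + mu) * τ))) := by
  have e1 : Real.exp (-(lam + mu) * τ) * Real.exp (lam * τ) = Real.exp (-(mu * τ)) := by
    rw [← Real.exp_add]; congr 1; ring
  have e2 : Real.exp (-(lam + mu) * τ) = Real.exp (-((lam + mu) * τ)) := by rw [neg_mul]
  linear_combination (τ ^ (α - 1) * (c / lam)) * e1 - (τ ^ (α-1) * (c/lam)) * e2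

lemma aux_tau (lam mu c α : ℝ) (hlam : 0 < lam) (hmu : 0 < mu) (hc : 0 < c) (hα : 2 < α) :
    ∫ τ in Ioi (0:ℝ), Real.exp (-(lam + mu) * τ) * τ ^ (α - 1) *
        ((c / lam) * (Real.exp (lam * τ) - 1))
      = (c / lam) * ((1/mu) ^ α * Real.Gamma α - (1/(lam+mu)) ^ α * Real.Gamma α) := by
  have ha : (0:ℝ) < α := by linarith
  simp only [aux_hpt lam mu c α]
  rw [integral_const_mul]
  rw [integral_sub (aux_gamma_int α mu ha hmu) (aux_gamma_int α (lam+mu) ha (by linarith))]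
  rw [Real.integral_rpow_mul_exp_neg_mul_Ioi ha hmu,
    Real.integral_rpow_mul_exp_neg_mul_Ioi ha (by linarith : (0:ℝ) < lam + mu)]

lemma aux_F_nonneg (lam mu c α : ℝ) (r τ : ℝ) (hr : 0 < r) (hτ : 0 < τ) :
    0 ≤ r * (Real.exp (-(lam + mu) * τ) * τ ^ (α - 1) *
        (Real.exp ((lam / c) * Real.sqrt (c ^ 2 * τ ^ 2 - r ^ 2)) /
          Real.sqrt (c ^ 2 * τ ^ 2 - r ^ 2))) := by
  have h1 : (0:ℝ) ≤ τ ^ (α - 1) := Real.rpow_nonneg hτ.le _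
  have h2 : (0:ℝ) ≤ Real.exp ((lam / c) * Real.sqrt (c ^ 2 * τ ^ 2 - r ^ 2)) /
      Real.sqrt (c ^ 2 * τ ^ 2 - r ^ 2) := div_nonneg (Real.exp_pos _).le (Real.sqrt_nonneg _)
  positivity

lemma aux_meas (lam mu c α : ℝ) :
    Measurable (fun p : ℝ × ℝ => p.1 * (Real.exp (-(lam + mu) * p.2) * p.2 ^ (α - 1) *
        (Real.exp ((lam / c) * Real.sqrt (c ^ 2 * p.2 ^ 2 - p.1 ^ 2)) /
          Real.sqrt (c ^ 2 * p.2 ^ 2 - p.1 ^ 2)))) := by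
  fun_prop

lemma aux_fubini (lam mu c α : ℝ) (hlam : 0 < lam) (hmu : 0 < mu) (hc : 0 < c) (hα : 2 < α) :
    ∫ r in Ioi (0:ℝ), ∫ τ in Ioi (0:ℝ), (r * (Real.exp (-(lam + mu) * τ) * τ ^ (α - 1) *
        (Real.exp ((lam / c) * Real.sqrt (c ^ 2 * τ ^ 2 - r ^ 2)) /
          Real.sqrt (c ^ 2 * τ ^ 2 - r ^ 2))))
      = (c / lam) * ((1/mu) ^ α * Real.Gamma α - (1/(lam+mu)) ^ α * Real.Gamma α) := by
  set F : ℝ → ℝ → ℝ := fun r τ => r * (Real.exp (-(lam + mu) * τ) * τ ^ (α - 1) *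
      (Real.exp ((lam / c) * Real.sqrt (c ^ 2 * τ ^ 2 - r ^ 2)) /
        Real.sqrt (c ^ 2 * τ ^ 2 - r ^ 2))) with hF
  have hmeas : AEStronglyMeasurable (Function.uncurry F)
      ((volume.restrict (Ioi (0:ℝ))).prod (volume.restrict (Ioi (0:ℝ)))) :=
    (aux_meas lam mu c α).aestronglyMeasurable
  have hslice : ∀ᵐ τ ∂(volume.restrict (Ioi (0:ℝ))),
      Integrable (fun r => F r τ) (volume.restrict (Ioi (0:ℝ))) := by
    refine (ae_restrict_mem measurableSet_Ioi).mono fun τ hτ => ?_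
    exact aux_slice_int lam mu c α τ hlam hmu hc hτ
  have hnorm : ∀ τ ∈ Ioi (0:ℝ), (∫ r in Ioi (0:ℝ), ‖F r τ‖)
      = Real.exp (-(lam + mu) * τ) * τ ^ (α - 1) * ((c / lam) * (Real.exp (lam * τ) - 1)) := by
    intro τ hτ
    rw [setIntegral_congr_fun measurableSet_Ioi
      (fun r hr => Real.norm_of_nonneg (aux_F_nonneg lam mu c α r τ hr hτ))]
    exact aux_slice_eq lam mu c α τ hlam hmu hc hτ
  have hVint : Integrable (fun τ => Real.exp (-(lam + mu) * τ) * τ ^ (α - 1) *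
      ((c / lam) * (Real.exp (lam * τ) - 1))) (volume.restrict (Ioi (0:ℝ))) := by
    have h1 : IntegrableOn (fun τ : ℝ => (c / lam) * (τ ^ (α - 1) * Real.exp (-(mu * τ))
        - τ ^ (α - 1) * Real.exp (-((lam + mu) * τ)))) (Ioi (0:ℝ)) :=
      (((aux_gamma_int α mu (by linarith) hmu).sub
        (aux_gamma_int α (lam+mu) (by linarith) (by linarith))).const_mul _)
    exact h1.congr_fun (fun τ _ => (aux_hpt lam mu c α τ).symm) measurableSet_Ioi
  have hint : Integrable (Function.uncurry F)
      ((volume.restrict (Ioi (0:ℝ))).prod (volume.restrict (Ioi (0:ℝ)))) := by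
    rw [integrable_prod_iff' hmeas]
    refine ⟨hslice, ?_⟩
    apply hVint.congr
    refine (ae_restrict_mem measurableSet_Ioi).mono fun τ hτ => ?_
    exact (hnorm τ hτ).symm
  rw [integral_integral_swap hint]
  rw [setIntegral_congr_fun measurableSet_Ioi
    (fun τ hτ => aux_slice_eq lam mu c α τ hlam hmu hc hτ)]
  exact aux_tau lam mu c α hlam hmu hc hα

lemma aux_tau_ind (lam mu c α r : ℝ) (hc : 0 < c) (hr : 0 < r) :
    ∫ τ in Ioi (r/c), Real.exp (-(lam + mu) * τ) * τ ^ (α - 1) *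
        (Real.exp ((lam / c) * Real.sqrt (c ^ 2 * τ ^ 2 - r ^ 2)) /
          Real.sqrt (c ^ 2 * τ ^ 2 - r ^ 2))
      = ∫ τ in Ioi (0:ℝ), Real.exp (-(lam + mu) * τ) * τ ^ (α - 1) *
        (Real.exp ((lam / c) * Real.sqrt (c ^ 2 * τ ^ 2 - r ^ 2)) /
          Real.sqrt (c ^ 2 * τ ^ 2 - r ^ 2)) := by
  have hrc : (0:ℝ) < r / c := by positivity
  set h : ℝ → ℝ := fun τ => Real.exp (-(lam + mu) * τ) * τ ^ (α - 1) *
      (Real.exp ((lam / c) * Real.sqrt (c ^ 2 * τ ^ 2 - r ^ 2)) /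
        Real.sqrt (c ^ 2 * τ ^ 2 - r ^ 2)) with hh
  have hind : indicator (Ioi (r/c)) h = indicator (Ioi (0:ℝ)) h := by
    funext τ
    by_cases h1 : r / c < τ
    · rw [indicator_of_mem (mem_Ioi.mpr h1), indicator_of_mem (mem_Ioi.mpr (lt_trans hrc h1))]
    · rw [indicator_of_notMem (by simpa using h1)]
      by_cases h0 : 0 < τ
      · have hcτ : c * τ ≤ r := by
          have : τ ≤ r / c := not_lt.1 h1
          calc c * τ ≤ c * (r / c) := by nlinarith
            _ = r := by field_simp
        have hsq : c ^ 2 * τ ^ 2 ≤ r ^ 2 := by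
          nlinarith [mul_le_mul hcτ hcτ (by positivity : (0:ℝ) ≤ c * τ) hr.le]
        rw [indicator_of_mem (mem_Ioi.mpr h0), hh]
        simp [aux_vanish c τ r hc hsq]
      · rw [indicator_of_notMem (by simpa using h0)]
  rw [← integral_indicator measurableSet_Ioi, hind, integral_indicator measurableSet_Ioi]

theorem stmt9 (lam mu c α : ℝ) (hlam : 0 < lam) (hmu : 0 < mu) (hc : 0 < c) (hα : 2 < α) :
    ∫ x : EuclideanSpace ℝ (Fin 2),
        (lam * mu ^ α / (2 * π * c * Real.Gamma α)) *
          ∫ τ in Ioi (‖x‖ / c),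
            Real.exp (-(lam + mu) * τ) * τ ^ (α - 1) *
              (Real.exp ((lam / c) * Real.sqrt (c ^ 2 * τ ^ 2 - ‖x‖ ^ 2)) /
                Real.sqrt (c ^ 2 * τ ^ 2 - ‖x‖ ^ 2))
      = 1 - (mu / (lam + mu)) ^ α := by
  set C : ℝ := lam * mu ^ α / (2 * π * c * Real.Gamma α) with hC
  set f0 : ℝ → ℝ := fun s => C * ∫ τ in Ioi (s / c),
      Real.exp (-(lam + mu) * τ) * τ ^ (α - 1) *
        (Real.exp ((lam / c) * Real.sqrt (c ^ 2 * τ ^ 2 - s ^ 2)) /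
          Real.sqrt (c ^ 2 * τ ^ 2 - s ^ 2)) with hf0
  have hLHS : (∫ x : EuclideanSpace ℝ (Fin 2),
      C * ∫ τ in Ioi (‖x‖ / c),
        Real.exp (-(lam + mu) * τ) * τ ^ (α - 1) *
          (Real.exp ((lam / c) * Real.sqrt (c ^ 2 * τ ^ 2 - ‖x‖ ^ 2)) /
            Real.sqrt (c ^ 2 * τ ^ 2 - ‖x‖ ^ 2)))
      = ∫ x : EuclideanSpace ℝ (Fin 2), f0 ‖x‖ := rfl
  rw [hLHS, MeasureTheory.integral_fun_norm_addHaar volume f0]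
  have hdim : Module.finrank ℝ (EuclideanSpace ℝ (Fin 2)) = 2 := finrank_euclideanSpace_fin
  rw [hdim]
  have hball : ((volume (Metric.ball (0 : EuclideanSpace ℝ (Fin 2)) 1)).toReal) = π := by
    rw [EuclideanSpace.volume_ball]
    simp only [Fintype.card_fin]
    norm_num [Real.Gamma_two, Real.sq_sqrt Real.pi_nonneg, ENNReal.toReal_ofReal Real.pi_nonneg]
  rw [measureReal_def, hball]
  have hintval : (∫ y in Ioi (0:ℝ), y ^ (2 - 1) • f0 y)
      = C * ((c / lam) * ((1/mu) ^ α * Real.Gamma α - (1/(lam+mu)) ^ α * Real.Gamma α)) := by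
    have hcongr : ∀ y ∈ Ioi (0:ℝ), y ^ (2-1) • f0 y
        = C * ∫ τ in Ioi (0:ℝ), (y * (Real.exp (-(lam + mu) * τ) * τ ^ (α - 1) *
            (Real.exp ((lam / c) * Real.sqrt (c ^ 2 * τ ^ 2 - y ^ 2)) /
              Real.sqrt (c ^ 2 * τ ^ 2 - y ^ 2)))) := by
      intro y hy
      have hy' : (0:ℝ) < y := hy
      simp only [show (2:ℕ) - 1 = 1 from rfl, pow_one, smul_eq_mul, hf0]
      rw [aux_tau_ind lam mu c α y hc hy', mul_left_comm, ← integral_const_mul y]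
    rw [setIntegral_congr_fun measurableSet_Ioi hcongr, integral_const_mul,
      aux_fubini lam mu c α hlam hmu hc hα]
  rw [hintval]
  have hμpow : mu ^ α * (1/mu) ^ α = 1 := by
    rw [← Real.mul_rpow hmu.le (by positivity), mul_one_div_cancel hmu.ne', Real.one_rpow]
  have hμpow2 : mu ^ α * (1/(lam+mu)) ^ α = (mu / (lam+mu)) ^ α := by
    rw [← Real.mul_rpow hmu.le (by positivity), mul_one_div]
  have hΓ : Real.Gamma α ≠ 0 := (Real.Gamma_pos_of_pos (by linarith)).ne'
  have hπ : π ≠ 0 := Real.pi_ne_zero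
  rw [hC]
  rw [smul_eq_mul, nsmul_eq_mul]
  push_cast
  field_simp
  linear_combination hμpow - hμpow2
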